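/- For all n ≥ 1, every permutation π of {1,…,n} satisfies ssc(π) ≤ n−1; that is, applying the stack-sorting operator S at most n−1 times to π yields the identity word 1,2,…,n. -/

import Mathlib

/-- The largest letter of a word (`0` for the empty word). -/
def listMax (l : List ℕ) : ℕ := l.foldr max 0

lemma listMax_mem {l : List ℕ} (h : l ≠ []) : listMax l ∈ l := by
  induction l with
  | nil => simp at h
  | cons a t ih =>
    rcases eq_or_ne t [] with rfl | ht
    · simp [listMax]
    · have ht' := ih ht
      have hcons : listMax (a :: t) = max a (listMax t) := rfl
      rcases le_total a (listMax t) with hle | hle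
      · rw [hcons, max_eq_right hle]; exact List.mem_cons_of_mem _ ht'
      · rw [hcons, max_eq_left hle]; exact List.mem_cons_self

/-- The stack-sorting operator `S`: `S` of the empty word is the empty word, and
if `π` is nonempty, writing `π = L·m·R` where `m` is the greatest letter of `π`,
then `S(π) = S(L)·S(R)·m`. -/
def stackSort : List ℕ → List ℕ
  | [] => []
  | x :: xs =>
    stackSort ((x :: xs).take ((x :: xs).idxOf (listMax (x :: xs)))) ++
      stackSort ((x :: xs).drop ((x :: xs).idxOf (listMax (x :: xs)) + 1)) ++
      [listMax (x :: xs)]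
termination_by l => l.length
decreasing_by
  · have hm : listMax (x :: xs) ∈ x :: xs := listMax_mem (by simp)
    have hi : (x :: xs).idxOf (listMax (x :: xs)) < (x :: xs).length :=
      List.idxOf_lt_length_iff.mpr hm
    simp only [List.length_take, List.length_cons] at *
    omega
  · simp only [List.length_drop, List.length_cons]
    omega

/-- `π` is a permutation of `{1, …, n}`, viewed as a word containing each of
`1, …, n` exactly once. -/
def IsPermWord (n : ℕ) (π : List ℕ) : Prop := π.Perm (List.range' 1 n)

/-- The stack-sorting complexity of `π`: the least `k ≥ 0` such that `S^k(π)`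
is the identity word `1, 2, …, n` (where `n` is the length of `π`). -/
noncomputable def ssc (π : List ℕ) : ℕ :=
  sInf {k : ℕ | stackSort^[k] π = List.range' 1 π.length}

lemma le_listMax {l : List ℕ} {x : ℕ} (h : x ∈ l) : x ≤ listMax l := by
  induction l with
  | nil => simp at h
  | cons a t ih =>
    rcases List.mem_cons.mp h with rfl | h
    · exact le_max_left _ _
    · exact le_trans (ih h) (le_max_right _ _)

lemma stackSort_perm : ∀ l : List ℕ, (stackSort l).Perm l
  | [] => by simp [stackSort]
  | x :: xs => by
    have hm : listMax (x :: xs) ∈ x :: xs := listMax_mem (by simp)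
    have hi : (x :: xs).idxOf (listMax (x :: xs)) < (x :: xs).length :=
      List.idxOf_lt_length_iff.mpr hm
    have h1 := stackSort_perm ((x :: xs).take ((x :: xs).idxOf (listMax (x :: xs))))
    have h2 := stackSort_perm ((x :: xs).drop ((x :: xs).idxOf (listMax (x :: xs)) + 1))
    rw [stackSort]
    set l := x :: xs
    set i := l.idxOf (listMax l) with hidef
    have hget : l.get ⟨i, hi⟩ = listMax l := List.idxOf_get hi
    have hdrop : l.drop i = listMax l :: l.drop (i + 1) := by
      rw [List.drop_eq_getElem_cons hi]; exact congrArg (· :: l.drop (i+1)) hget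
    have step1 : (stackSort (l.take i) ++ stackSort (l.drop (i+1)) ++ [listMax l]).Perm
        (l.take i ++ l.drop (i+1) ++ [listMax l]) :=
      (h1.append h2).append (List.Perm.refl _)
    have step2 : (l.take i ++ (l.drop (i+1) ++ [listMax l])).Perm
        (l.take i ++ (listMax l :: l.drop (i+1))) :=
      (List.Perm.refl _).append (List.perm_append_singleton _ _)
    have step3 : l.take i ++ (listMax l :: l.drop (i+1)) = l := by
      rw [← hdrop, List.take_append_drop]
    rw [step3] at step2
    refine step1.trans ?_
    rw [List.append_assoc]
    exact step2
termination_by l => l.length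
decreasing_by
  · have hm : listMax (x :: xs) ∈ x :: xs := listMax_mem (by simp)
    have hi : (x :: xs).idxOf (listMax (x :: xs)) < (x :: xs).length :=
      List.idxOf_lt_length_iff.mpr hm
    simp only [List.length_take, List.length_cons] at *
    omega
  · simp only [List.length_drop, List.length_cons]
    omega

lemma stackSort_split (L R : List ℕ) (m : ℕ) (hL : ∀ x ∈ L, x < m) (hR : ∀ x ∈ R, x < m) :
    stackSort (L ++ m :: R) = stackSort L ++ stackSort R ++ [m] := by
  have hmax : listMax (L ++ m :: R) = m := by
    apply le_antisymm
    · have hmem : listMax (L ++ m :: R) ∈ L ++ m :: R := listMax_mem (by simp)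
      rcases List.mem_append.mp hmem with h | h
      · exact le_of_lt (hL _ h)
      · rcases List.mem_cons.mp h with h | h
        · exact le_of_eq h
        · exact le_of_lt (hR _ h)
    · exact le_listMax (by simp)
  have hnotmem : m ∉ L := fun h => lt_irrefl m (hL m h)
  have hidx : (L ++ m :: R).idxOf m = L.length := by
    rw [List.idxOf_append_of_notMem hnotmem]
    simp
  have hcons : ∃ y ys, L ++ m :: R = y :: ys := by
    cases L with
    | nil => exact ⟨m, R, rfl⟩
    | cons a t => exact ⟨a, t ++ m :: R, rfl⟩
  obtain ⟨y, ys, hys⟩ := hcons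
  rw [hys, stackSort, ← hys, hmax, hidx]
  congr 1
  congr 1
  · rw [List.take_left]
  · have : (L ++ m :: R).drop (L.length + 1) = (m :: R).drop 1 := by simp [List.drop_append]
    simpa using this

lemma iter_concat (m : ℕ) : ∀ (k : ℕ) (w : List ℕ), (∀ x ∈ w, x < m) →
    stackSort^[k] (w ++ [m]) = stackSort^[k] w ++ [m] := by
  intro k
  induction k with
  | zero => intro w _; simp
  | succ k ih =>
    intro w hw
    have hsplit : stackSort (w ++ [m]) = stackSort w ++ [m] := by
      simpa [stackSort] using stackSort_split w [] m hw (by simp)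
    have hw' : ∀ x ∈ stackSort w, x < m := fun x hx => hw x ((stackSort_perm w).mem_iff.mp hx)
    rw [Function.iterate_succ_apply, hsplit, ih _ hw', Function.iterate_succ_apply]

lemma sorted_after : ∀ n : ℕ, 1 ≤ n → ∀ π : List ℕ, π.Perm (List.range' 1 n) →
    stackSort^[n-1] π = List.range' 1 n := by
  intro n hn
  induction n, hn using Nat.le_induction with
  | base =>
    intro π hπ
    have : π = [1] := List.perm_singleton.mp (by simpa using hπ)
    simp [this]
  | succ n hn ih =>
    intro π hπ
    -- decompose π around n+1
    have hmem : n + 1 ∈ π := hπ.mem_iff.mpr (by rw [List.mem_range'_1]; omega)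
    have hilt : π.idxOf (n+1) < π.length := List.idxOf_lt_length_iff.mpr hmem
    set i := π.idxOf (n+1) with hidef
    have hget : π.get ⟨i, hilt⟩ = n + 1 := List.idxOf_get hilt
    have hπeq : π = π.take i ++ (n+1) :: π.drop (i+1) := by
      conv_lhs => rw [← List.take_append_drop i π]
      rw [List.drop_eq_getElem_cons hilt]; exact congrArg (fun a => π.take i ++ a :: π.drop (i+1)) hget
    set L := π.take i
    set R := π.drop (i+1)
    have hnodup : π.Nodup := hπ.nodup_iff.mpr (List.nodup_range' (step := 1) (by norm_num))
    have hnodup' : (L ++ (n+1) :: R).Nodup := hπeq ▸ hnodup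
    have hbound : ∀ x ∈ π, x ≤ n + 1 := by
      intro x hx
      have := hπ.mem_iff.mp hx
      rw [List.mem_range'_1] at this
      omega
    have hL : ∀ x ∈ L, x < n + 1 := by
      intro x hx
      have hxπ : x ∈ π := hπeq ▸ (List.mem_append.mpr (Or.inl hx))
      have hne : x ≠ n + 1 := by
        rintro rfl
        obtain ⟨-, -, hdisj⟩ := List.nodup_append.mp hnodup'
        exact hdisj _ hx _ List.mem_cons_self rfl
      exact lt_of_le_of_ne (hbound x hxπ) hne
    have hR : ∀ x ∈ R, x < n + 1 := by
      intro x hx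
      have hxπ : x ∈ π := hπeq ▸ (List.mem_append.mpr (Or.inr (List.mem_cons_of_mem _ hx)))
      have hne : x ≠ n + 1 := by
        rintro rfl
        obtain ⟨-, hco, -⟩ := List.nodup_append.mp hnodup'
        exact (List.nodup_cons.mp hco).1 hx
      exact lt_of_le_of_ne (hbound x hxπ) hne
    have hsplit : stackSort π = (stackSort L ++ stackSort R) ++ [n+1] := by
      rw [hπeq] at *
      exact stackSort_split L R (n+1) hL hR
    -- (stackSort L ++ stackSort R) is a permutation of range' 1 n
    have hperm : (stackSort L ++ stackSort R).Perm (List.range' 1 n) := by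
      have h1 : (stackSort L ++ stackSort R).Perm (L ++ R) :=
        (stackSort_perm L).append (stackSort_perm R)
      have h2 : (L ++ (n+1) :: R).Perm ((n+1) :: (L ++ R)) := List.perm_middle
      have h3 : (List.range' 1 (n+1)).Perm ((n+1) :: List.range' 1 n) := by
        have : List.range' 1 (n+1) = List.range' 1 n ++ [1 + n] := by
          simpa using (List.range'_concat : List.range' 1 (n+1) 1 = List.range' 1 n 1 ++ [1 + 1 * n])
        rw [this]
        have := List.perm_append_singleton (1 + n) (List.range' 1 n)
        simpa [Nat.add_comm] using this
      have h4 : ((n+1) :: (L ++ R)).Perm ((n+1) :: List.range' 1 n) :=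
        (h2.symm.trans (hπeq ▸ hπ)).trans h3
      exact h1.trans (h4.cons_inv)
    have hLR : ∀ x ∈ stackSort L ++ stackSort R, x < n + 1 := by
      intro x hx
      have := hperm.mem_iff.mp hx
      rw [List.mem_range'_1] at this
      omega
    have hn1 : n + 1 - 1 = (n - 1) + 1 := by omega
    rw [hn1, Function.iterate_succ_apply, hsplit, iter_concat _ _ _ hLR, ih _ hperm]
    have : List.range' 1 (n+1) = List.range' 1 n ++ [1 + n] := by
      simpa using (List.range'_concat : List.range' 1 (n+1) 1 = List.range' 1 n 1 ++ [1 + 1 * n])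
    rw [this, Nat.add_comm 1 n]

/-- For all `n ≥ 1`, every permutation `π` of `{1,…,n}` satisfies `ssc(π) ≤ n−1`;
that is, applying `S` at most `n−1` times to `π` yields the identity word. -/
theorem ssc_le_n_sub_one (n : ℕ) (hn : 1 ≤ n) (π : List ℕ) (hπ : IsPermWord n π) :
    stackSort^[n - 1] π = List.range' 1 n ∧ ssc π ≤ n - 1 := by
  have h := sorted_after n hn π hπ
  refine ⟨h, ?_⟩
  have hlen : π.length = n := by
    have := hπ.length_eq
    simpa using this
  apply Nat.sInf_le
  simp only [Set.mem_setOf_eq, hlen]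
  exact h
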